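/- Let A, B, C be nonzero integers, let a, b, c ∈ ℂ satisfy a⁴ = A, b⁴ = B, c⁴ = C, let ζ = e^{πi/4}, and let F = ℚ(ζ, a², b/a, c/a) ⊆ ℂ. Suppose [F : ℚ] = 128. Then F/ℚ is a Galois extension, and there exist field automorphisms σ, τ, ι_a, ι_b, ι_c of F over ℚ, which together generate Gal(F/ℚ), acting on the generators as follows (where i = ζ²): σ fixes a², b/a, c/a and sends ζ to ζ⁻¹; τ fixes a², b/a, c/a and sends ζ to ζ³; ι_a fixes ζ and sends a² to −a², b/a to −i·b/a, and c/a to −i·c/a; ι_b fixes ζ, a², c/a and sends b/a to i·b/a; ι_c fixes ζ, a², b/a and sends c/a to i·c/a. -/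

import Mathlib

open IntermediateField Polynomial

/-- Action specification of an automorphism on the four generators. -/
def GSpec {F : Type*} [Field F] [Algebra ℚ F] (v : F →+* ℂ) (ζ A2 BA CA : ℂ)
    (zF aF bF cF : F) (g : F ≃ₐ[ℚ] F) (e s j k : ℤ) : Prop :=
  v (g zF) = ζ ^ e ∧ v (g aF) = ζ ^ s * A2 ∧ v (g bF) = ζ ^ j * BA ∧ v (g cF) = ζ ^ k * CA

namespace GSpec

variable {F : Type*} [Field F] [Algebra ℚ F] {v : F →+* ℂ} {ζ A2 BA CA : ℂ}
  {zF aF bF cF : F}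

theorem congr {g : F ≃ₐ[ℚ] F} {e s j k e' s' j' k' : ℤ}
    (h : GSpec v ζ A2 BA CA zF aF bF cF g e s j k)
    (he : e = e') (hs : s = s') (hj : j = j') (hk : k = k') :
    GSpec v ζ A2 BA CA zF aF bF cF g e' s' j' k' := by
  subst he hs hj hk; exact h

theorem of_eq {g g' : F ≃ₐ[ℚ] F} {e s j k : ℤ}
    (h : GSpec v ζ A2 BA CA zF aF bF cF g e s j k) (hg : g = g') :
    GSpec v ζ A2 BA CA zF aF bF cF g' e s j k := hg ▸ h

theorem mul (hv : Function.Injective v) (hζ0 : ζ ≠ 0)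
    (hz : v zF = ζ) (haf : v aF = A2) (hbf : v bF = BA) (hcf : v cF = CA)
    {g h : F ≃ₐ[ℚ] F} {e s j k e' s' j' k' : ℤ}
    (hg : GSpec v ζ A2 BA CA zF aF bF cF g e s j k)
    (hh : GSpec v ζ A2 BA CA zF aF bF cF h e' s' j' k') :
    GSpec v ζ A2 BA CA zF aF bF cF (g * h) (e * e') (e * s' + s) (e * j' + j) (e * k' + k) := by
  obtain ⟨hge, hgs, hgj, hgk⟩ := hg
  obtain ⟨hhe, hhs, hhj, hhk⟩ := hh
  have hz' : h zF = zF ^ e' := by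
    apply hv; rw [map_zpow₀, hz, hhe]
  have ha' : h aF = zF ^ s' * aF := by
    apply hv; rw [map_mul, map_zpow₀, hz, haf, hhs]
  have hb' : h bF = zF ^ j' * bF := by
    apply hv; rw [map_mul, map_zpow₀, hz, hbf, hhj]
  have hc' : h cF = zF ^ k' * cF := by
    apply hv; rw [map_mul, map_zpow₀, hz, hcf, hhk]
  refine ⟨?_, ?_, ?_, ?_⟩
  · rw [AlgEquiv.mul_apply, hz', map_zpow₀, map_zpow₀, hge, ← zpow_mul]
  · rw [AlgEquiv.mul_apply, ha']
    simp only [map_mul, map_zpow₀, hge, hgs]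
    rw [← zpow_mul, ← mul_assoc, ← zpow_add₀ hζ0]
  · rw [AlgEquiv.mul_apply, hb']
    simp only [map_mul, map_zpow₀, hge, hgj]
    rw [← zpow_mul, ← mul_assoc, ← zpow_add₀ hζ0]
  · rw [AlgEquiv.mul_apply, hc']
    simp only [map_mul, map_zpow₀, hge, hgk]
    rw [← zpow_mul, ← mul_assoc, ← zpow_add₀ hζ0]

theorem one (hz : v zF = ζ) (haf : v aF = A2) (hbf : v bF = BA) (hcf : v cF = CA) :
    GSpec v ζ A2 BA CA zF aF bF cF 1 1 0 0 0 := by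
  refine ⟨?_, ?_, ?_, ?_⟩ <;>
    simp [AlgEquiv.one_apply, hz, haf, hbf, hcf]

theorem pow (hv : Function.Injective v) (hζ0 : ζ ≠ 0)
    (hz : v zF = ζ) (haf : v aF = A2) (hbf : v bF = BA) (hcf : v cF = CA)
    {g : F ≃ₐ[ℚ] F} {s j k : ℤ}
    (hg : GSpec v ζ A2 BA CA zF aF bF cF g 1 s j k) (n : ℕ) :
    GSpec v ζ A2 BA CA zF aF bF cF (g ^ n) 1 (n * s) (n * j) (n * k) := by
  induction n with
  | zero =>
      simpa using GSpec.one hz haf hbf hcf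
  | succ n ih =>
      have h2 := GSpec.mul hv hζ0 hz haf hbf hcf hg ih
      rw [← pow_succ'] at h2
      exact h2.congr (by ring) (by push_cast; ring) (by push_cast; ring) (by push_cast; ring)

end GSpec


private lemma unit_inj_aux (P Q P' Q' : ℤ)
    (hP0 : 0 ≤ P) (hP2 : P < 2) (hQ0 : 0 ≤ Q) (hQ2 : Q < 2)
    (hP'0 : 0 ≤ P') (hP'2 : P' < 2) (hQ'0 : 0 ≤ Q') (hQ'2 : Q' < 2)
    (h : (8 : ℤ) ∣ (1 + 6 * P) * (1 + 2 * Q) - (1 + 6 * P') * (1 + 2 * Q')) :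
    P = P' ∧ Q = Q' := by
  rcases (by omega : P = 0 ∨ P = 1) with rfl | rfl <;>
    rcases (by omega : Q = 0 ∨ Q = 1) with rfl | rfl <;>
    rcases (by omega : P' = 0 ∨ P' = 1) with rfl | rfl <;>
    rcases (by omega : Q' = 0 ∨ Q' = 1) with rfl | rfl <;>
    omega

private lemma octic_cancel_aux (P Q x y : ℤ)
    (hP0 : 0 ≤ P) (hP2 : P < 2) (hQ0 : 0 ≤ Q) (hQ2 : Q < 2)
    (h : (8 : ℤ) ∣ (1 + 6 * P) * (1 + 2 * Q) * x - (1 + 6 * P) * (1 + 2 * Q) * y) :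
    (8 : ℤ) ∣ x - y := by
  rcases (by omega : P = 0 ∨ P = 1) with rfl | rfl <;>
    rcases (by omega : Q = 0 ∨ Q = 1) with rfl | rfl <;>
    norm_num at h <;> omega

set_option maxHeartbeats 3200000 in
/-- Proposition 3.1 (field-theoretic content): for nonzero integers `A, B, C` with
chosen complex 4-th roots `a, b, c`, `ζ = e^{πi/4}`, and
`F = ℚ(ζ, a², b/a, c/a)` of degree `128` over `ℚ`, the extension `F/ℚ` is Galois
and its Galois group is generated by automorphisms `σ, τ, ι_a, ι_b, ι_c` acting on
the generators `ζ, a², b/a, c/a` as described (with `i = ζ²`). -/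
theorem generic_galois_group_of_degree_two_delPezzo
    (A B C : ℤ) (hA : A ≠ 0) (hB : B ≠ 0) (hC : C ≠ 0)
    (a b c : ℂ) (ha : a ^ 4 = (A : ℂ)) (hb : b ^ 4 = (B : ℂ)) (hc : c ^ 4 = (C : ℂ))
    (ζ : ℂ) (hζ : ζ = Complex.exp (Real.pi * Complex.I / 4))
    (F : IntermediateField ℚ ℂ)
    (hF : F = IntermediateField.adjoin ℚ {ζ, a ^ 2, b / a, c / a})
    (hdeg : Module.finrank ℚ F = 128) :
    IsGalois ℚ F ∧
    ∃ σ τ ιa ιb ιc : F ≃ₐ[ℚ] F,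
      Subgroup.closure {σ, τ, ιa, ιb, ιc} = (⊤ : Subgroup (F ≃ₐ[ℚ] F)) ∧
      (∀ x : F, (x : ℂ) = ζ →
        ((σ x : ℂ) = ζ⁻¹ ∧ (τ x : ℂ) = ζ ^ 3 ∧ (ιa x : ℂ) = ζ ∧
          (ιb x : ℂ) = ζ ∧ (ιc x : ℂ) = ζ)) ∧
      (∀ x : F, (x : ℂ) = a ^ 2 →
        ((σ x : ℂ) = a ^ 2 ∧ (τ x : ℂ) = a ^ 2 ∧ (ιa x : ℂ) = -(a ^ 2) ∧
          (ιb x : ℂ) = a ^ 2 ∧ (ιc x : ℂ) = a ^ 2)) ∧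
      (∀ x : F, (x : ℂ) = b / a →
        ((σ x : ℂ) = b / a ∧ (τ x : ℂ) = b / a ∧ (ιa x : ℂ) = -ζ ^ 2 * (b / a) ∧
          (ιb x : ℂ) = ζ ^ 2 * (b / a) ∧ (ιc x : ℂ) = b / a)) ∧
      (∀ x : F, (x : ℂ) = c / a →
        ((σ x : ℂ) = c / a ∧ (τ x : ℂ) = c / a ∧ (ιa x : ℂ) = -ζ ^ 2 * (c / a) ∧
          (ιb x : ℂ) = c / a ∧ (ιc x : ℂ) = ζ ^ 2 * (c / a))) := by
  ----------------------------------------------------------------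
  -- Stage 0: basic facts
  ----------------------------------------------------------------
  have hπ : ζ = Complex.exp (2 * Real.pi * Complex.I / 8) := by
    rw [hζ]; congr 1; ring
  have hprim : IsPrimitiveRoot ζ 8 := hπ ▸ Complex.isPrimitiveRoot_exp 8 (by norm_num)
  have hζ0 : ζ ≠ 0 := hprim.ne_zero (by norm_num)
  have hζ8 : ζ ^ 8 = 1 := hprim.pow_eq_one
  have hζ4 : ζ ^ 4 = -1 := by
    have h2 : (ζ ^ 4 - 1) * (ζ ^ 4 + 1) = 0 := by linear_combination hζ8
    rcases mul_eq_zero.mp h2 with h | h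
    · exact absurd (sub_eq_zero.mp h)
        (hprim.pow_ne_one_of_pos_of_lt (by norm_num) (by norm_num))
    · exact eq_neg_of_add_eq_zero_left h
  have ha0 : a ≠ 0 := by
    intro h; apply hA
    have : (A : ℂ) = 0 := by rw [← ha, h]; ring
    exact_mod_cast this
  have hb0 : b ≠ 0 := by
    intro h; apply hB
    have : (B : ℂ) = 0 := by rw [← hb, h]; ring
    exact_mod_cast this
  have hc0 : c ≠ 0 := by
    intro h; apply hC
    have : (C : ℂ) = 0 := by rw [← hc, h]; ring
    exact_mod_cast this
  have hA0 : (A : ℂ) ≠ 0 := by exact_mod_cast hA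
  have hB0 : (B : ℂ) ≠ 0 := by exact_mod_cast hB
  have hC0 : (C : ℂ) ≠ 0 := by exact_mod_cast hC
  have hba0 : b / a ≠ 0 := div_ne_zero hb0 ha0
  have hca0 : c / a ≠ 0 := div_ne_zero hc0 ha0
  have ha20 : a ^ 2 ≠ 0 := pow_ne_zero 2 ha0
  have hζmem : ζ ∈ F := by rw [hF]; exact subset_adjoin ℚ _ (by simp)
  have hamem : a ^ 2 ∈ F := by rw [hF]; exact subset_adjoin ℚ _ (by simp)
  have hbmem : b / a ∈ F := by rw [hF]; exact subset_adjoin ℚ _ (by simp)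
  have hcmem : c / a ∈ F := by rw [hF]; exact subset_adjoin ℚ _ (by simp)
  haveI : FiniteDimensional ℚ F :=
    Module.finite_of_finrank_pos (by rw [hdeg]; norm_num)
  have hbBA : (b / a) ^ 4 = (B : ℂ) / (A : ℂ) := by rw [div_pow, ha, hb]
  have hcCA : (c / a) ^ 4 = (C : ℂ) / (A : ℂ) := by rw [div_pow, ha, hc]
  have ha2A : (a ^ 2) ^ 2 = (A : ℂ) := by rw [← pow_mul]; exact_mod_cast ha
  have hi4 : IsPrimitiveRoot (ζ ^ 2) 4 := hprim.pow (by norm_num) (by norm_num)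
  ----------------------------------------------------------------
  -- Stage 1: F is a splitting field, hence Galois
  ----------------------------------------------------------------
  set p : Polynomial ℚ :=
    (X ^ 8 - Polynomial.C 1) * ((X ^ 2 - Polynomial.C (A : ℚ)) *
      ((X ^ 4 - Polynomial.C ((B : ℚ) / (A : ℚ))) *
        (X ^ 4 - Polynomial.C ((C : ℚ) / (A : ℚ))))) with hpdef
  have hp0 : p ≠ 0 := by
    refine Polynomial.Monic.ne_zero ?_
    exact (monic_X_pow_sub_C _ (by norm_num)).mul
      ((monic_X_pow_sub_C _ (by norm_num)).mul
        ((monic_X_pow_sub_C _ (by norm_num)).mul (monic_X_pow_sub_C _ (by norm_num))))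
  have heval : ∀ z : ℂ, Polynomial.aeval z p =
      (z ^ 8 - 1) * ((z ^ 2 - (A : ℂ)) *
        ((z ^ 4 - (B : ℂ) / (A : ℂ)) * (z ^ 4 - (C : ℂ) / (A : ℂ)))) := by
    intro z
    simp only [hpdef, map_mul, map_sub, map_pow, Polynomial.aeval_X, Polynomial.aeval_C,
      eq_ratCast]
    push_cast
    ring
  have hFroot : F = adjoin ℚ (p.rootSet ℂ) := by
    apply le_antisymm
    · rw [hF]
      apply adjoin_le_iff.mpr
      intro z hz
      have hzr : z ∈ p.rootSet ℂ := by
        rw [Polynomial.mem_rootSet]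
        refine ⟨hp0, ?_⟩
        rw [heval]
        rcases hz with rfl | rfl | rfl | rfl
        · rw [hζ8]; ring
        · rw [ha2A]; ring
        · rw [hbBA]; ring
        · rw [hcCA]; ring
      exact subset_adjoin ℚ _ hzr
    · apply adjoin_le_iff.mpr
      intro z hz
      obtain ⟨-, hz⟩ := Polynomial.mem_rootSet.mp hz
      rw [heval] at hz
      rcases mul_eq_zero.mp hz with h1 | h'
      · have h8 : z ^ 8 = 1 := sub_eq_zero.mp h1
        obtain ⟨r, _, hrz⟩ := hprim.eq_pow_of_pow_eq_one h8
        rw [← hrz]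
        exact pow_mem hζmem r
      rcases mul_eq_zero.mp h' with h2 | h''
      · have h2' : z ^ 2 = (A : ℂ) := sub_eq_zero.mp h2
        have : (z - a ^ 2) * (z + a ^ 2) = 0 := by
          linear_combination h2' - ha2A
        rcases mul_eq_zero.mp this with h | h
        · have : z = a ^ 2 := sub_eq_zero.mp h
          rw [this]; exact hamem
        · have : z = -(a ^ 2) := by linear_combination h
          rw [this]; exact neg_mem hamem
      rcases mul_eq_zero.mp h'' with h3 | h4
      · have h3' : z ^ 4 = (B : ℂ) / (A : ℂ) := sub_eq_zero.mp h3
        have hr : (z / (b / a)) ^ 4 = 1 := by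
          rw [div_pow, hbBA, h3', div_self (div_ne_zero hB0 hA0)]
        obtain ⟨k, _, hkz⟩ := hi4.eq_pow_of_pow_eq_one hr
        have : z = (ζ ^ 2) ^ k * (b / a) := by
          rw [hkz, div_mul_cancel₀ _ hba0]
        rw [this]
        exact mul_mem (pow_mem (pow_mem hζmem 2) k) hbmem
      · have h4' : z ^ 4 = (C : ℂ) / (A : ℂ) := sub_eq_zero.mp h4
        have hr : (z / (c / a)) ^ 4 = 1 := by
          rw [div_pow, hcCA, h4', div_self (div_ne_zero hC0 hA0)]
        obtain ⟨k, _, hkz⟩ := hi4.eq_pow_of_pow_eq_one hr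
        have : z = (ζ ^ 2) ^ k * (c / a) := by
          rw [hkz, div_mul_cancel₀ _ hca0]
        rw [this]
        exact mul_mem (pow_mem (pow_mem hζmem 2) k) hcmem
  haveI hsplit : Polynomial.IsSplittingField ℚ F p := by
    refine IntermediateField.isSplittingField_iff.mpr ?_
    refine ⟨?_, hFroot⟩
    exact splits_of_splits (IsAlgClosed.splits _)
      (fun x hx => hFroot ▸ subset_adjoin ℚ _ hx)
  haveI hnormal : Normal ℚ F := Normal.of_isSplittingField p
  haveI hGalois : IsGalois ℚ F := ⟨⟩
  refine ⟨hGalois, ?_⟩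
  ----------------------------------------------------------------
  -- Stage 2: classification of automorphisms
  ----------------------------------------------------------------
  set vR : F →+* ℂ := F.val.toRingHom with hvR
  have hv : Function.Injective vR := Subtype.coe_injective
  set zF : F := ⟨ζ, hζmem⟩ with hzF
  set aF : F := ⟨a ^ 2, hamem⟩ with haF
  set bF : F := ⟨b / a, hbmem⟩ with hbF
  set cF : F := ⟨c / a, hcmem⟩ with hcF
  have hvz : vR zF = ζ := rfl
  have hva : vR aF = a ^ 2 := rfl
  have hvb : vR bF = b / a := rfl
  have hvc : vR cF = c / a := rfl
  have hprimF : IsPrimitiveRoot zF 8 := by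
    apply IsPrimitiveRoot.of_map_of_injective (f := vR) _ hv
    rwa [hvz]
  have haFq : aF ^ 2 = algebraMap ℚ F ((A : ℚ)) := by
    apply hv; rw [map_pow, hva]
    simp only [vR, RingHom.coe_coe]
    rw [ha2A]
    simp [IntermediateField.algebraMap_apply]
  have hbFq : bF ^ 4 = algebraMap ℚ F ((B : ℚ) / (A : ℚ)) := by
    apply hv; rw [map_pow, hvb]
    simp only [vR, RingHom.coe_coe]
    rw [hbBA]
    simp [IntermediateField.algebraMap_apply]
  have hcFq : cF ^ 4 = algebraMap ℚ F ((C : ℚ) / (A : ℚ)) := by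
    apply hv; rw [map_pow, hvc]
    simp only [vR, RingHom.coe_coe]
    rw [hcCA]
    simp [IntermediateField.algebraMap_apply]
  have hclass : ∀ g : F ≃ₐ[ℚ] F, ∃ t : Fin 4 × Fin 2 × Fin 4 × Fin 4,
      vR (g zF) = ζ ^ (2 * (t.1 : ℕ) + 1) ∧
      vR (g aF) = ζ ^ (4 * (t.2.1 : ℕ)) * a ^ 2 ∧
      vR (g bF) = ζ ^ (2 * (t.2.2.1 : ℕ)) * (b / a) ∧
      vR (g cF) = ζ ^ (2 * (t.2.2.2 : ℕ)) * (c / a) := by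
    intro g
    have hgprim : IsPrimitiveRoot (vR (g zF)) 8 :=
      (hprimF.map_of_injective g.injective).map_of_injective hv
    obtain ⟨r, hr8, hrz⟩ := hprim.eq_pow_of_pow_eq_one hgprim.pow_eq_one
    have hrodd : r % 2 = 1 := by
      rcases Nat.even_or_odd r with he | ho
      · exfalso
        obtain ⟨u, hu⟩ := he
        have : (vR (g zF)) ^ 4 = 1 := by
          rw [← hrz, ← pow_mul, hu]
          have : (u + u) * 4 = 8 * u := by ring
          rw [this, pow_mul, hζ8, one_pow]
        exact hgprim.pow_ne_one_of_pos_of_lt (by norm_num) (by norm_num) this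
      · exact Nat.odd_iff.mp ho
    have hga2 : (vR (g aF)) ^ 2 = (a ^ 2) ^ 2 := by
      rw [← map_pow, ← map_pow, haFq, AlgEquiv.commutes, ha2A]
      simp [vR, IntermediateField.algebraMap_apply]
    have hgacases : vR (g aF) = a ^ 2 ∨ vR (g aF) = -(a ^ 2) := by
      have : (vR (g aF) - a ^ 2) * (vR (g aF) + a ^ 2) = 0 := by linear_combination hga2
      rcases mul_eq_zero.mp this with h | h
      · exact Or.inl (sub_eq_zero.mp h)
      · exact Or.inr (eq_neg_of_add_eq_zero_left h)
    have hgb4 : (vR (g bF)) ^ 4 = (b / a) ^ 4 := by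
      rw [← map_pow, ← map_pow, hbFq, AlgEquiv.commutes, hbBA]
      simp [vR, IntermediateField.algebraMap_apply]
    have hgbr : ((vR (g bF)) / (b / a)) ^ 4 = 1 := by
      rw [div_pow, hgb4, div_self (pow_ne_zero 4 hba0)]
    obtain ⟨m, hm4, hmz⟩ := hi4.eq_pow_of_pow_eq_one hgbr
    have hgb : vR (g bF) = ζ ^ (2 * m) * (b / a) := by
      rw [pow_mul, hmz, div_mul_cancel₀ _ hba0]
    have hgc4 : (vR (g cF)) ^ 4 = (c / a) ^ 4 := by
      rw [← map_pow, ← map_pow, hcFq, AlgEquiv.commutes, hcCA]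
      simp [vR, IntermediateField.algebraMap_apply]
    have hgcr : ((vR (g cF)) / (c / a)) ^ 4 = 1 := by
      rw [div_pow, hgc4, div_self (pow_ne_zero 4 hca0)]
    obtain ⟨n, hn4, hnz⟩ := hi4.eq_pow_of_pow_eq_one hgcr
    have hgc : vR (g cF) = ζ ^ (2 * n) * (c / a) := by
      rw [pow_mul, hnz, div_mul_cancel₀ _ hca0]
    refine ⟨⟨⟨(r - 1) / 2, by omega⟩,
      (if vR (g aF) = a ^ 2 then 0 else 1), ⟨m, hm4⟩, ⟨n, hn4⟩⟩, ?_, ?_, ?_, ?_⟩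
    · have : 2 * ((r - 1) / 2) + 1 = r := by omega
      rw [this]; exact hrz.symm
    · rcases hgacases with h | h
      · rw [if_pos h]; simpa using h
      · have hne : vR (g aF) ≠ a ^ 2 := by
          rw [h]; intro hcon
          exact ha20 (by linear_combination (-(1:ℂ)/2) * hcon)
        rw [if_neg hne]
        simp only [Fin.val_one]
        rw [h, show (4 * 1 : ℕ) = 4 from rfl, hζ4]
        ring
    · exact hgb
    · exact hgc
  choose D hD using hclass
  ----------------------------------------------------------------
  -- Stage 3: D is bijective; obtain the five automorphisms
  ----------------------------------------------------------------
  have hext : ∀ g g' : F ≃ₐ[ℚ] F,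
      g zF = g' zF → g aF = g' aF → g bF = g' bF → g cF = g' cF → g = g' := by
    intro g g' h1 h2 h3 h4
    have hco : (g : F →ₐ[ℚ] F) = (g' : F →ₐ[ℚ] F) := by
      apply IntermediateField.algHom_ext_of_eq_adjoin ℚ hF
      intro x hx
      rcases hx with rfl | rfl | rfl | rfl
      · exact h1
      · exact h2
      · exact h3
      · exact h4
    exact AlgEquiv.ext fun x => AlgHom.ext_iff.mp hco x
  have hDinj : Function.Injective D := by
    intro g g' h
    apply hext g g'
    · apply hv; rw [(hD g).1, (hD g').1, h]
    · apply hv; rw [(hD g).2.1, (hD g').2.1, h]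
    · apply hv; rw [(hD g).2.2.1, (hD g').2.2.1, h]
    · apply hv; rw [(hD g).2.2.2, (hD g').2.2.2, h]
  have hcard : Fintype.card (F ≃ₐ[ℚ] F) = 128 := by
    rw [← Nat.card_eq_fintype_card, IsGalois.card_aut_eq_finrank, hdeg]
  have hDbij : Function.Bijective D :=
    (Fintype.bijective_iff_injective_and_card D).mpr
      ⟨hDinj, by simp only [Fintype.card_prod, Fintype.card_fin, hcard]⟩
  obtain ⟨σ, hσ⟩ := hDbij.2 ⟨3, 0, 0, 0⟩
  obtain ⟨τ, hτ⟩ := hDbij.2 ⟨1, 0, 0, 0⟩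
  obtain ⟨ιa, hιa⟩ := hDbij.2 ⟨0, 1, 3, 3⟩
  obtain ⟨ιb, hιb⟩ := hDbij.2 ⟨0, 0, 1, 0⟩
  obtain ⟨ιc, hιc⟩ := hDbij.2 ⟨0, 0, 0, 1⟩
  -- explicit action equalities
  have hc40 : ((0 : Fin 4) : ℕ) = 0 := rfl
  have hc41 : ((1 : Fin 4) : ℕ) = 1 := rfl
  have hc43 : ((3 : Fin 4) : ℕ) = 3 := rfl
  have hc20 : ((0 : Fin 2) : ℕ) = 0 := rfl
  have hc21 : ((1 : Fin 2) : ℕ) = 1 := rfl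
  have hσ1 : vR (σ zF) = ζ ^ 7 := by
    have h := (hD σ).1; rw [hσ] at h; rw [h]; norm_num [hc40, hc41, hc43, hc20, hc21]
  have hσ2 : vR (σ aF) = a ^ 2 := by
    have h := (hD σ).2.1; rw [hσ] at h; rw [h]; norm_num [hc40, hc41, hc43, hc20, hc21]
  have hσ3 : vR (σ bF) = b / a := by
    have h := (hD σ).2.2.1; rw [hσ] at h; rw [h]; norm_num [hc40, hc41, hc43, hc20, hc21]
  have hσ4 : vR (σ cF) = c / a := by
    have h := (hD σ).2.2.2; rw [hσ] at h; rw [h]; norm_num [hc40, hc41, hc43, hc20, hc21]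
  have hτ1 : vR (τ zF) = ζ ^ 3 := by
    have h := (hD τ).1; rw [hτ] at h; rw [h]; norm_num [hc40, hc41, hc43, hc20, hc21]
  have hτ2 : vR (τ aF) = a ^ 2 := by
    have h := (hD τ).2.1; rw [hτ] at h; rw [h]; norm_num [hc40, hc41, hc43, hc20, hc21]
  have hτ3 : vR (τ bF) = b / a := by
    have h := (hD τ).2.2.1; rw [hτ] at h; rw [h]; norm_num [hc40, hc41, hc43, hc20, hc21]
  have hτ4 : vR (τ cF) = c / a := by
    have h := (hD τ).2.2.2; rw [hτ] at h; rw [h]; norm_num [hc40, hc41, hc43, hc20, hc21]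
  have hιa1 : vR (ιa zF) = ζ := by
    have h := (hD ιa).1; rw [hιa] at h; rw [h]; norm_num [hc40, hc41, hc43, hc20, hc21]
  have hιa2 : vR (ιa aF) = ζ ^ 4 * a ^ 2 := by
    have h := (hD ιa).2.1; rw [hιa] at h; rw [h]; norm_num [hc40, hc41, hc43, hc20, hc21]
  have hιa3 : vR (ιa bF) = ζ ^ 6 * (b / a) := by
    have h := (hD ιa).2.2.1; rw [hιa] at h; rw [h]; norm_num [hc40, hc41, hc43, hc20, hc21]
  have hιa4 : vR (ιa cF) = ζ ^ 6 * (c / a) := by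
    have h := (hD ιa).2.2.2; rw [hιa] at h; rw [h]; norm_num [hc40, hc41, hc43, hc20, hc21]
  have hιb1 : vR (ιb zF) = ζ := by
    have h := (hD ιb).1; rw [hιb] at h; rw [h]; norm_num [hc40, hc41, hc43, hc20, hc21]
  have hιb2 : vR (ιb aF) = a ^ 2 := by
    have h := (hD ιb).2.1; rw [hιb] at h; rw [h]; norm_num [hc40, hc41, hc43, hc20, hc21]
  have hιb3 : vR (ιb bF) = ζ ^ 2 * (b / a) := by
    have h := (hD ιb).2.2.1; rw [hιb] at h; rw [h]; norm_num [hc40, hc41, hc43, hc20, hc21]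
  have hιb4 : vR (ιb cF) = c / a := by
    have h := (hD ιb).2.2.2; rw [hιb] at h; rw [h]; norm_num [hc40, hc41, hc43, hc20, hc21]
  have hιc1 : vR (ιc zF) = ζ := by
    have h := (hD ιc).1; rw [hιc] at h; rw [h]; norm_num [hc40, hc41, hc43, hc20, hc21]
  have hιc2 : vR (ιc aF) = a ^ 2 := by
    have h := (hD ιc).2.1; rw [hιc] at h; rw [h]; norm_num [hc40, hc41, hc43, hc20, hc21]
  have hιc3 : vR (ιc bF) = b / a := by
    have h := (hD ιc).2.2.1; rw [hιc] at h; rw [h]; norm_num [hc40, hc41, hc43, hc20, hc21]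
  have hιc4 : vR (ιc cF) = ζ ^ 2 * (c / a) := by
    have h := (hD ιc).2.2.2; rw [hιc] at h; rw [h]; norm_num [hc40, hc41, hc43, hc20, hc21]
  ----------------------------------------------------------------
  -- Stage 4: GSpec data for the five generators
  ----------------------------------------------------------------
  have natz : ∀ (n : ℕ), (ζ : ℂ) ^ ((n : ℤ)) = ζ ^ n := fun n => zpow_natCast ζ n
  have gsσ : GSpec vR ζ (a ^ 2) (b / a) (c / a) zF aF bF cF σ 7 0 0 0 := by
    refine ⟨?_, ?_, ?_, ?_⟩
    · rw [show (7 : ℤ) = ((7 : ℕ) : ℤ) by norm_num, natz]; exact hσ1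
    · simpa using hσ2
    · simpa using hσ3
    · simpa using hσ4
  have gsτ : GSpec vR ζ (a ^ 2) (b / a) (c / a) zF aF bF cF τ 3 0 0 0 := by
    refine ⟨?_, ?_, ?_, ?_⟩
    · rw [show (3 : ℤ) = ((3 : ℕ) : ℤ) by norm_num, natz]; exact hτ1
    · simpa using hτ2
    · simpa using hτ3
    · simpa using hτ4
  have gsιa : GSpec vR ζ (a ^ 2) (b / a) (c / a) zF aF bF cF ιa 1 4 6 6 := by
    refine ⟨?_, ?_, ?_, ?_⟩
    · simpa using hιa1
    · rw [show (4 : ℤ) = ((4 : ℕ) : ℤ) by norm_num, natz]; exact hιa2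
    · rw [show (6 : ℤ) = ((6 : ℕ) : ℤ) by norm_num, natz]; exact hιa3
    · rw [show (6 : ℤ) = ((6 : ℕ) : ℤ) by norm_num, natz]; exact hιa4
  have gsιb : GSpec vR ζ (a ^ 2) (b / a) (c / a) zF aF bF cF ιb 1 0 2 0 := by
    refine ⟨?_, ?_, ?_, ?_⟩
    · simpa using hιb1
    · simpa using hιb2
    · rw [show (2 : ℤ) = ((2 : ℕ) : ℤ) by norm_num, natz]; exact hιb3
    · simpa using hιb4
  have gsιc : GSpec vR ζ (a ^ 2) (b / a) (c / a) zF aF bF cF ιc 1 0 0 2 := by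
    refine ⟨?_, ?_, ?_, ?_⟩
    · simpa using hιc1
    · simpa using hιc2
    · simpa using hιc3
    · rw [show (2 : ℤ) = ((2 : ℕ) : ℤ) by norm_num, natz]; exact hιc4
  ----------------------------------------------------------------
  -- Stage 5: the five automorphisms generate the whole group
  ----------------------------------------------------------------
  have gsσp : ∀ pp : Fin 2, GSpec vR ζ (a ^ 2) (b / a) (c / a) zF aF bF cF
      (σ ^ (pp : ℕ)) (1 + 6 * (pp : ℕ)) 0 0 0 := by
    intro pp
    fin_cases pp
    · exact ((GSpec.one hvz hva hvb hvc).of_eq (pow_zero σ).symm).congr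
        (by norm_num) rfl rfl rfl
    · exact (gsσ.of_eq (pow_one σ).symm).congr (by norm_num) rfl rfl rfl
  have gsτq : ∀ qq : Fin 2, GSpec vR ζ (a ^ 2) (b / a) (c / a) zF aF bF cF
      (τ ^ (qq : ℕ)) (1 + 2 * (qq : ℕ)) 0 0 0 := by
    intro qq
    fin_cases qq
    · exact ((GSpec.one hvz hva hvb hvc).of_eq (pow_zero τ).symm).congr
        (by norm_num) rfl rfl rfl
    · exact (gsτ.of_eq (pow_one τ).symm).congr (by norm_num) rfl rfl rfl
  have gsιaε : ∀ ε : Fin 2, GSpec vR ζ (a ^ 2) (b / a) (c / a) zF aF bF cF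
      (ιa ^ (ε : ℕ)) 1 (4 * (ε : ℕ)) (6 * (ε : ℕ)) (6 * (ε : ℕ)) := by
    intro ε
    have h := GSpec.pow hv hζ0 hvz hva hvb hvc gsιa (ε : ℕ)
    exact h.congr rfl (by ring) (by ring) (by ring)
  have gsιbm : ∀ m : Fin 4, GSpec vR ζ (a ^ 2) (b / a) (c / a) zF aF bF cF
      (ιb ^ (m : ℕ)) 1 0 (2 * (m : ℕ)) 0 := by
    intro m
    have h := GSpec.pow hv hζ0 hvz hva hvb hvc gsιb (m : ℕ)
    exact h.congr rfl (by ring) (by ring) (by ring)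
  have gsιcn : ∀ n : Fin 4, GSpec vR ζ (a ^ 2) (b / a) (c / a) zF aF bF cF
      (ιc ^ (n : ℕ)) 1 0 0 (2 * (n : ℕ)) := by
    intro n
    have h := GSpec.pow hv hζ0 hvz hva hvb hvc gsιc (n : ℕ)
    exact h.congr rfl (by ring) (by ring) (by ring)
  -- the product map
  have gsQ : ∀ (pp qq ε : Fin 2) (m n : Fin 4),
      GSpec vR ζ (a ^ 2) (b / a) (c / a) zF aF bF cF
        (σ ^ (pp : ℕ) * (τ ^ (qq : ℕ) * (ιa ^ (ε : ℕ) * (ιb ^ (m : ℕ) * ιc ^ (n : ℕ)))))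
        ((1 + 6 * (pp : ℕ)) * (1 + 2 * (qq : ℕ)))
        ((1 + 6 * (pp : ℕ)) * (1 + 2 * (qq : ℕ)) * (4 * (ε : ℕ)))
        ((1 + 6 * (pp : ℕ)) * (1 + 2 * (qq : ℕ)) * (2 * (m : ℕ) + 6 * (ε : ℕ)))
        ((1 + 6 * (pp : ℕ)) * (1 + 2 * (qq : ℕ)) * (2 * (n : ℕ) + 6 * (ε : ℕ))) := by
    intro pp qq ε m n
    have h1 := GSpec.mul hv hζ0 hvz hva hvb hvc (gsιbm m) (gsιcn n)
    have h2 := GSpec.mul hv hζ0 hvz hva hvb hvc (gsιaε ε) h1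
    have h3 := GSpec.mul hv hζ0 hvz hva hvb hvc (gsτq qq) h2
    have h4 := GSpec.mul hv hζ0 hvz hva hvb hvc (gsσp pp) h3
    exact h4.congr (by ring) (by ring) (by ring) (by ring)
  -- divisibility extraction
  have hdvd : ∀ x y : ℤ, ζ ^ x = ζ ^ y → (8 : ℤ) ∣ x - y := by
    intro x y hxy
    have h1 : ζ ^ (x - y) = 1 := by
      rw [zpow_sub₀ hζ0, hxy, div_self (zpow_ne_zero _ hζ0)]
    have := (hprim.zpow_eq_one_iff_dvd (x - y)).mp h1
    exact_mod_cast this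
  -- injectivity of the product map
  have hQinj : Function.Injective
      (fun t : Fin 2 × Fin 2 × Fin 2 × Fin 4 × Fin 4 =>
        σ ^ (t.1 : ℕ) * (τ ^ (t.2.1 : ℕ) * (ιa ^ (t.2.2.1 : ℕ) *
          (ιb ^ (t.2.2.2.1 : ℕ) * ιc ^ (t.2.2.2.2 : ℕ))))) := by
    rintro ⟨pp, qq, ε, m, n⟩ ⟨pp', qq', ε', m', n'⟩ h
    simp only at h
    have ht := gsQ pp qq ε m n
    have ht' := gsQ pp' qq' ε' m' n'
    rw [h] at ht
    have d1 := hdvd _ _ (ht.1.symm.trans ht'.1)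
    have d2 := hdvd _ _ (mul_right_cancel₀ ha20 (ht.2.1.symm.trans ht'.2.1))
    have d3 := hdvd _ _ (mul_right_cancel₀ hba0 (ht.2.2.1.symm.trans ht'.2.2.1))
    have d4 := hdvd _ _ (mul_right_cancel₀ hca0 (ht.2.2.2.symm.trans ht'.2.2.2))
    obtain ⟨hpe, hqe⟩ := unit_inj_aux _ _ _ _
      (by positivity) (by exact_mod_cast pp.isLt) (by positivity) (by exact_mod_cast qq.isLt)
      (by positivity) (by exact_mod_cast pp'.isLt) (by positivity) (by exact_mod_cast qq'.isLt)
      d1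
    rw [← hpe, ← hqe] at d2 d3 d4
    have e2 := octic_cancel_aux _ _ _ _
      (by positivity) (by exact_mod_cast pp.isLt) (by positivity) (by exact_mod_cast qq.isLt) d2
    have e3 := octic_cancel_aux _ _ _ _
      (by positivity) (by exact_mod_cast pp.isLt) (by positivity) (by exact_mod_cast qq.isLt) d3
    have e4 := octic_cancel_aux _ _ _ _
      (by positivity) (by exact_mod_cast pp.isLt) (by positivity) (by exact_mod_cast qq.isLt) d4
    have hεlt := ε.isLt; have hε'lt := ε'.isLt
    have hmlt := m.isLt; have hm'lt := m'.isLt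
    have hnlt := n.isLt; have hn'lt := n'.isLt
    simp only [Prod.mk.injEq]
    refine ⟨Fin.ext ?_, Fin.ext ?_, Fin.ext ?_, Fin.ext ?_, Fin.ext ?_⟩ <;> omega
  ----------------------------------------------------------------
  -- Stage 6: the closure is everything
  ----------------------------------------------------------------
  have hQmem : ∀ t : Fin 2 × Fin 2 × Fin 2 × Fin 4 × Fin 4,
      σ ^ (t.1 : ℕ) * (τ ^ (t.2.1 : ℕ) * (ιa ^ (t.2.2.1 : ℕ) *
        (ιb ^ (t.2.2.2.1 : ℕ) * ιc ^ (t.2.2.2.2 : ℕ)))) ∈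
        Subgroup.closure {σ, τ, ιa, ιb, ιc} := by
    intro t
    have hσm : σ ∈ Subgroup.closure {σ, τ, ιa, ιb, ιc} :=
      Subgroup.subset_closure (by simp)
    have hτm : τ ∈ Subgroup.closure {σ, τ, ιa, ιb, ιc} :=
      Subgroup.subset_closure (by simp)
    have hιam : ιa ∈ Subgroup.closure {σ, τ, ιa, ιb, ιc} :=
      Subgroup.subset_closure (by simp)
    have hιbm : ιb ∈ Subgroup.closure {σ, τ, ιa, ιb, ιc} :=
      Subgroup.subset_closure (by simp)
    have hιcm : ιc ∈ Subgroup.closure {σ, τ, ιa, ιb, ιc} :=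
      Subgroup.subset_closure (by simp)
    exact mul_mem (pow_mem hσm _) (mul_mem (pow_mem hτm _)
      (mul_mem (pow_mem hιam _) (mul_mem (pow_mem hιbm _) (pow_mem hιcm _))))
  have hclosure : Subgroup.closure {σ, τ, ιa, ιb, ιc} = (⊤ : Subgroup (F ≃ₐ[ℚ] F)) := by
    apply Subgroup.eq_top_of_card_eq
    have hinj2 : Function.Injective
        (fun t : Fin 2 × Fin 2 × Fin 2 × Fin 4 × Fin 4 =>
          (⟨σ ^ (t.1 : ℕ) * (τ ^ (t.2.1 : ℕ) * (ιa ^ (t.2.2.1 : ℕ) *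
            (ιb ^ (t.2.2.2.1 : ℕ) * ιc ^ (t.2.2.2.2 : ℕ)))), hQmem t⟩ :
            Subgroup.closure {σ, τ, ιa, ιb, ιc})) := by
      intro t t' h
      exact hQinj (congrArg Subtype.val h)
    have h128 : (128 : ℕ) ≤ Nat.card (Subgroup.closure {σ, τ, ιa, ιb, ιc}) := by
      have := Nat.card_le_card_of_injective _ hinj2
      simpa using this
    have hle : Nat.card (Subgroup.closure {σ, τ, ιa, ιb, ιc}) ≤
        Nat.card (F ≃ₐ[ℚ] F) :=
      Nat.card_le_card_of_injective _ Subtype.val_injective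
    have hG : Nat.card (F ≃ₐ[ℚ] F) = 128 := by
      rw [Nat.card_eq_fintype_card, hcard]
    omega
  ----------------------------------------------------------------
  -- Stage 7: conclusion
  ----------------------------------------------------------------
  have h7inv : ζ ^ 7 = ζ⁻¹ :=
    eq_inv_of_mul_eq_one_left (by rw [← pow_succ]; exact hζ8)
  have h6m : ζ ^ 6 = -ζ ^ 2 := by
    have : ζ ^ 6 = ζ ^ 4 * ζ ^ 2 := by ring
    rw [this, hζ4]; ring
  refine ⟨σ, τ, ιa, ιb, ιc, hclosure, ?_, ?_, ?_, ?_⟩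
  · intro x hx
    have hxz : x = zF := Subtype.ext hx
    subst hxz
    exact ⟨h7inv ▸ hσ1, hτ1, hιa1, hιb1, hιc1⟩
  · intro x hx
    have hxz : x = aF := Subtype.ext hx
    subst hxz
    refine ⟨hσ2, hτ2, ?_, hιb2, hιc2⟩
    show vR (ιa aF) = -(a ^ 2)
    rw [hιa2, hζ4]; ring
  · intro x hx
    have hxz : x = bF := Subtype.ext hx
    subst hxz
    refine ⟨hσ3, hτ3, ?_, hιb3, hιc3⟩
    show vR (ιa bF) = -ζ ^ 2 * (b / a)
    rw [hιa3, h6m]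
  · intro x hx
    have hxz : x = cF := Subtype.ext hx
    subst hxz
    refine ⟨hσ4, hτ4, ?_, hιb4, hιc4⟩
    show vR (ιa cF) = -ζ ^ 2 * (c / a)
    rw [hιa4, h6m]
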